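/- Optimality of Voronoi partitions: let Q ⊂ ℝ^d be compact convex, φ positive bounded measurable, f : ℝ≥0 → ℝ≥0 increasing. For any N-partition v = (v₁,…,v_N) of Q (closed sets with nonempty interiors covering Q, with pairwise disjoint interiors) and any N distinct points p = (p₁,…,p_N) ∈ Q^N, the multicenter cost H(v,p) = Σᵢ ∫_{vᵢ} f(‖pᵢ−q‖) φ(q) dq satisfies H(V(p), p) ≤ H(v, p), where V(p) is the Voronoi partition of Q generated by p. -/

import Mathlib

open MeasureTheory

/-- Optimality of Voronoi partitions: for any `N`-partition `v` of the compact
convex set `Q ⊂ ℝ^d` (closed sets with nonempty interiors covering `Q` with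
pairwise disjoint interiors), any `N` distinct points `p ∈ Q^N`, positive
bounded measurable `φ` and increasing `f`, the multicenter cost of the
Voronoi partition generated by `p` does not exceed that of `v`. -/
theorem stmt_18 (d N : ℕ) (Q : Set (EuclideanSpace ℝ (Fin d)))
    (hQc : IsCompact Q) (hQconv : Convex ℝ Q)
    (φ : EuclideanSpace ℝ (Fin d) → ℝ) (hφm : Measurable φ)
    (hφpos : ∀ x ∈ Q, 0 < φ x) (hφbdd : ∃ M, ∀ x ∈ Q, φ x ≤ M)
    (f : ℝ → ℝ) (hf0 : ∀ x ∈ Set.Ici (0:ℝ), 0 ≤ f x)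
    (hfmono : MonotoneOn f (Set.Ici (0:ℝ)))
    (v : Fin N → Set (EuclideanSpace ℝ (Fin d)))
    (hvcl : ∀ i, IsClosed (v i)) (hvint : ∀ i, (interior (v i)).Nonempty)
    (hvQ : ∀ i, v i ⊆ Q) (hvcover : (⋃ i, v i) = Q)
    (hvdisj : ∀ i j, i ≠ j → interior (v i) ∩ interior (v j) = ∅)
    (p : Fin N → EuclideanSpace ℝ (Fin d))
    (hpQ : ∀ i, p i ∈ Q) (hpdist : ∀ i j, i ≠ j → p i ≠ p j) :
    (∑ i, ∫ q in {q ∈ Q | ∀ j, ‖q - p i‖ ≤ ‖q - p j‖}, f (‖p i - q‖) * φ q) ≤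
      ∑ i, ∫ q in v i, f (‖p i - q‖) * φ q := by
  classical
  set μ : Measure (EuclideanSpace ℝ (Fin d)) := volume with hμ
  set g : Fin N → EuclideanSpace ℝ (Fin d) → ℝ := fun i q => f (‖p i - q‖) * φ q with hgdef
  set W : Fin N → Set (EuclideanSpace ℝ (Fin d)) :=
    fun i => {q ∈ Q | ∀ j, ‖q - p i‖ ≤ ‖q - p j‖} with hWdef
  have hQm : MeasurableSet Q := hQc.isClosed.measurableSet
  have hWQ : ∀ i, W i ⊆ Q := fun i q hq => hq.1
  -- measurability of W
  have hWm : ∀ i, MeasurableSet (W i) := by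
    intro i
    have : W i = Q ∩ ⋂ j, {q | ‖q - p i‖ ≤ ‖q - p j‖} := by
      ext q; simp [hWdef, Set.mem_iInter]
    rw [this]
    refine hQm.inter (MeasurableSet.iInter fun j => ?_)
    exact (isClosed_le ((continuous_id.sub continuous_const).norm)
      ((continuous_id.sub continuous_const).norm)).measurableSet
  -- measurability of g
  have hgm : ∀ i, Measurable (g i) := by
    intro i
    have hFmono : Monotone fun x => f (max x 0) := fun x y hxy =>
      hfmono (le_max_right x 0) (le_max_right y 0) (max_le_max hxy le_rfl)
    have h1 : Measurable fun q : EuclideanSpace ℝ (Fin d) => ‖p i - q‖ :=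
      (continuous_const.sub continuous_id).norm.measurable
    have h2 : (fun q : EuclideanSpace ℝ (Fin d) => f (‖p i - q‖))
        = fun q => f (max ‖p i - q‖ 0) := by
      funext q; rw [max_eq_left (norm_nonneg _)]
    have : Measurable fun q : EuclideanSpace ℝ (Fin d) => f (‖p i - q‖) := by
      rw [h2]; exact hFmono.measurable.comp h1
    exact this.mul hφm
  -- nonnegativity of g on Q
  have hgnn : ∀ i, ∀ q ∈ Q, 0 ≤ g i q := fun i q hq =>
    mul_nonneg (hf0 _ (norm_nonneg _)) (hφpos q hq).le
  -- integrability of g on Q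
  obtain ⟨M, hM⟩ := hφbdd
  obtain ⟨R, hR⟩ := hQc.isBounded.subset_closedBall 0
  have hgint : ∀ i, IntegrableOn (g i) Q μ := by
    intro i
    set R' : ℝ := max R 0 with hR'
    have h2R : (0:ℝ) ≤ 2 * R' := by positivity
    refine Measure.integrableOn_of_bounded (M := f (2 * R') * max M 0)
      hQc.measure_lt_top.ne (hgm i).aestronglyMeasurable ?_
    refine ae_restrict_of_forall_mem hQm fun q hq => ?_
    have hqR : ‖q‖ ≤ R' := le_trans (by simpa using hR hq) (le_max_left _ _)
    have hpR : ‖p i‖ ≤ R' := le_trans (by simpa using hR (hpQ i)) (le_max_left _ _)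
    have hle : ‖p i - q‖ ≤ 2 * R' := by
      calc ‖p i - q‖ ≤ ‖p i‖ + ‖q‖ := norm_sub_le _ _
        _ ≤ R' + R' := add_le_add hpR hqR
        _ = 2 * R' := by ring
    have hf1 : f (‖p i - q‖) ≤ f (2 * R') := hfmono (norm_nonneg _) h2R hle
    have hf2 : (0:ℝ) ≤ f (‖p i - q‖) := hf0 _ (norm_nonneg _)
    have hφ1 : φ q ≤ max M 0 := le_trans (hM q hq) (le_max_left _ _)
    have hφ2 : (0:ℝ) ≤ φ q := (hφpos q hq).le
    rw [Real.norm_eq_abs, abs_of_nonneg (hgnn i q hq)]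
    exact mul_le_mul hf1 hφ1 hφ2 (le_trans hf2 hf1)
  -- disjointified families
  set A : Fin N → Set (EuclideanSpace ℝ (Fin d)) :=
    fun k => W k \ ⋃ (j) (_ : j < k), W j with hAdef
  set B : Fin N → Set (EuclideanSpace ℝ (Fin d)) :=
    fun i => v i \ ⋃ (j) (_ : j < i), v j with hBdef
  have hAW : ∀ k, A k ⊆ W k := fun k => Set.diff_subset
  have hBv : ∀ i, B i ⊆ v i := fun i => Set.diff_subset
  have hAm : ∀ k, MeasurableSet (A k) := fun k =>
    (hWm k).diff (MeasurableSet.iUnion fun j => MeasurableSet.iUnion fun _ => hWm j)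
  have hBm : ∀ i, MeasurableSet (B i) := fun i =>
    (hvcl i).measurableSet.diff
      (MeasurableSet.iUnion fun j => MeasurableSet.iUnion fun _ => (hvcl j).measurableSet)
  have hAdisj : Pairwise (Function.onFun Disjoint A) := by
    intro k l hkl
    rcases lt_or_gt_of_ne hkl with h | h
    · refine Set.disjoint_left.2 fun q hqk hql => ?_
      exact hql.2 (Set.mem_iUnion.2 ⟨k, Set.mem_iUnion.2 ⟨h, hqk.1⟩⟩)
    · refine Set.disjoint_left.2 fun q hqk hql => ?_
      exact hqk.2 (Set.mem_iUnion.2 ⟨l, Set.mem_iUnion.2 ⟨h, hql.1⟩⟩)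
  have hBdisjoint : Pairwise (Function.onFun Disjoint B) := by
    intro k l hkl
    rcases lt_or_gt_of_ne hkl with h | h
    · refine Set.disjoint_left.2 fun q hqk hql => ?_
      exact hql.2 (Set.mem_iUnion.2 ⟨k, Set.mem_iUnion.2 ⟨h, hqk.1⟩⟩)
    · refine Set.disjoint_left.2 fun q hqk hql => ?_
      exact hqk.2 (Set.mem_iUnion.2 ⟨l, Set.mem_iUnion.2 ⟨h, hql.1⟩⟩)
  -- Q is covered by the B i
  have hBcover : Q ⊆ ⋃ i, B i := by
    intro q hq
    have : ∃ i, q ∈ v i := by rw [← hvcover] at hq; exact Set.mem_iUnion.1 hq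
    obtain ⟨i, hi⟩ := this
    set s : Finset (Fin N) := Finset.univ.filter (fun j => q ∈ v j) with hs
    have hsne : s.Nonempty := ⟨i, by simp [hs, hi]⟩
    refine Set.mem_iUnion.2 ⟨s.min' hsne, ?_⟩
    constructor
    · have := s.min'_mem hsne; simp [hs] at this; exact this
    · intro hmem
      obtain ⟨j, hj⟩ := Set.mem_iUnion.1 hmem
      obtain ⟨hjlt, hjv⟩ := Set.mem_iUnion.1 hj
      exact absurd (s.min'_le j (by simp [hs, hjv])) (not_le.2 hjlt)
  -- Q is covered by the A k
  have hAcover : Q ⊆ ⋃ k, A k := by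
    intro q hq
    have hN : Nonempty (Fin N) := by
      have : ∃ i, q ∈ v i := by rw [← hvcover] at hq; exact Set.mem_iUnion.1 hq
      exact ⟨this.choose⟩
    have hWcover : ∃ k, q ∈ W k := by
      obtain ⟨k, _, hk⟩ := Finset.exists_min_image Finset.univ
        (fun j => ‖q - p j‖) Finset.univ_nonempty
      exact ⟨k, hq, fun j => hk j (Finset.mem_univ j)⟩
    set s : Finset (Fin N) := Finset.univ.filter (fun j => q ∈ W j) with hs
    have hsne : s.Nonempty := ⟨hWcover.choose, by simp [hs, hWcover.choose_spec]⟩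
    refine Set.mem_iUnion.2 ⟨s.min' hsne, ?_⟩
    constructor
    · have := s.min'_mem hsne; simp [hs] at this; exact this
    · intro hmem
      obtain ⟨j, hj⟩ := Set.mem_iUnion.1 hmem
      obtain ⟨hjlt, hjW⟩ := Set.mem_iUnion.1 hj
      exact absurd (s.min'_le j (by simp [hs, hjW])) (not_le.2 hjlt)
  -- the difference W k \ A k is null (contained in bisector hyperplanes)
  have hnull : ∀ k, μ (W k \ A k) = 0 := by
    intro k
    have hsub : W k \ A k ⊆ ⋃ (j) (_ : j ≠ k),
        (AffineSubspace.perpBisector (p k) (p j) : Set (EuclideanSpace ℝ (Fin d))) := by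
      intro q hq
      have hq1 : q ∈ W k := hq.1
      have hq2 : q ∈ ⋃ (j) (_ : j < k), W j := by
        by_contra h; exact hq.2 ⟨hq1, h⟩
      obtain ⟨j, hj⟩ := Set.mem_iUnion.1 hq2
      obtain ⟨hjlt, hjW⟩ := Set.mem_iUnion.1 hj
      have hjk : j ≠ k := ne_of_lt hjlt
      refine Set.mem_iUnion.2 ⟨j, Set.mem_iUnion.2 ⟨hjk, ?_⟩⟩
      rw [SetLike.mem_coe, AffineSubspace.mem_perpBisector_iff_dist_eq]
      have h1 : ‖q - p k‖ ≤ ‖q - p j‖ := hq1.2 j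
      have h2 : ‖q - p j‖ ≤ ‖q - p k‖ := hjW.2 k
      rw [dist_eq_norm, dist_eq_norm]
      exact le_antisymm h1 h2
    refine measure_mono_null hsub (measure_iUnion_null fun j => ?_)
    rcases eq_or_ne j k with rfl | hjk
    · simp
    · refine measure_iUnion_null fun _ => ?_
      exact Measure.addHaar_affineSubspace μ _
        (by simpa [AffineSubspace.perpBisector_eq_top] using (hpdist k j (Ne.symm hjk)))
  have hAeq : ∀ k, (A k : Set _) =ᵐ[μ] W k := by
    intro k
    rw [MeasureTheory.ae_eq_set]
    constructor
    · rw [Set.diff_eq_empty.2 (hAW k)]; simp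
    · exact hnull k
  -- step 1 : integral over W k equals integral over A k
  have step1 : ∀ k, ∫ q in W k, g k q ∂μ = ∫ q in A k, g k q ∂μ := by
    intro k
    exact (setIntegral_congr_set (hAeq k)).symm
  -- step 2 : integral over A k is the sum of integrals over A k ∩ B i
  have step2 : ∀ k, ∫ q in A k, g k q ∂μ = ∑ i, ∫ q in A k ∩ B i, g k q ∂μ := by
    intro k
    have hcov : A k = ⋃ i, A k ∩ B i := by
      rw [← Set.inter_iUnion]
      exact (Set.inter_eq_self_of_subset_left
        (((hAW k).trans (hWQ k)).trans hBcover)).symm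
    calc ∫ q in A k, g k q ∂μ = ∫ q in ⋃ i, A k ∩ B i, g k q ∂μ := by rw [← hcov]
      _ = ∑ i, ∫ q in A k ∩ B i, g k q ∂μ := by
          rw [integral_iUnion (fun i => (hAm k).inter (hBm i))
            (fun i j hij => (Set.disjoint_left.2 fun q hqi hqj =>
              Set.disjoint_left.1 (hBdisjoint hij) hqi.2 hqj.2))
            ((hgint k).mono_set (by rw [← hcov]; exact (hAW k).trans (hWQ k))), tsum_fintype]
  -- step 3 : pointwise comparison on A k ∩ B i
  have step3 : ∀ k i, ∫ q in A k ∩ B i, g k q ∂μ ≤ ∫ q in A k ∩ B i, g i q ∂μ := by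
    intro k i
    have hsubQ : A k ∩ B i ⊆ Q := fun q hq => (hWQ k) (hAW k hq.1)
    refine setIntegral_mono_on ((hgint k).mono_set hsubQ) ((hgint i).mono_set hsubQ)
      ((hAm k).inter (hBm i)) fun q hq => ?_
    have hqW : q ∈ W k := hAW k hq.1
    have h1 : ‖q - p k‖ ≤ ‖q - p i‖ := hqW.2 i
    have h2 : f (‖p k - q‖) ≤ f (‖p i - q‖) := by
      rw [norm_sub_rev (p k) q, norm_sub_rev (p i) q]
      exact hfmono (norm_nonneg _) (norm_nonneg _) h1
    exact mul_le_mul_of_nonneg_right h2 (hφpos q (hsubQ hq)).le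
  -- step 4 : sum over k of integrals over A k ∩ B i is at most integral over v i
  have step4 : ∀ i, ∑ k, ∫ q in A k ∩ B i, g i q ∂μ ≤ ∫ q in v i, g i q ∂μ := by
    intro i
    have hsub : (⋃ k, A k ∩ B i) ⊆ v i := by
      rw [← Set.iUnion_inter]
      exact (Set.inter_subset_right).trans (hBv i)
    have heq : ∑ k, ∫ q in A k ∩ B i, g i q ∂μ = ∫ q in ⋃ k, A k ∩ B i, g i q ∂μ := by
      rw [integral_iUnion (fun k => (hAm k).inter (hBm i))
        (fun k l hkl => (Set.disjoint_left.2 fun q hqk hql =>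
          Set.disjoint_left.1 (hAdisj hkl) hqk.1 hql.1))
        ((hgint i).mono_set (hsub.trans (hvQ i))), tsum_fintype]
    rw [heq]
    refine setIntegral_mono_set ((hgint i).mono_set (hvQ i)) ?_
      (HasSubset.Subset.eventuallyLE hsub)
    exact ae_restrict_of_forall_mem (hvcl i).measurableSet fun q hq => hgnn i q (hvQ i hq)
  -- assemble
  calc (∑ k, ∫ q in W k, g k q ∂μ)
      = ∑ k, ∫ q in A k, g k q ∂μ := Finset.sum_congr rfl fun k _ => step1 k
    _ = ∑ k, ∑ i, ∫ q in A k ∩ B i, g k q ∂μ := Finset.sum_congr rfl fun k _ => step2 k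
    _ ≤ ∑ k, ∑ i, ∫ q in A k ∩ B i, g i q ∂μ :=
        Finset.sum_le_sum fun k _ => Finset.sum_le_sum fun i _ => step3 k i
    _ = ∑ i, ∑ k, ∫ q in A k ∩ B i, g i q ∂μ := Finset.sum_comm
    _ ≤ ∑ i, ∫ q in v i, g i q ∂μ := Finset.sum_le_sum fun i _ => step4 i
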